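/- Let A be a finite set, ω ∈ A^{ℤ^d} a coloring, (B,‖·‖) an arbitrary Banach space, (Q_j)_{j∈ℕ} a Følner sequence in ℤ^d, and F : F → B a bounded, ω-invariant, almost additive field with boundary term b. Assume that for every finite pattern P : Λ → A (Λ ∈ F) the frequency ν_P := lim_{j→∞} ♯_P(ω|_{Q_j})/|Q_j| exists. Then the limit F̄ := lim_{j→∞} F(Q_j)/|Q_j| exists in B, the limit lim_{L→∞} Σ_{P∈A^{Λ_L}} ν_P F̃(P)/|Λ_L| exists in B, and the two limits are equal. -/

import Mathlib

open Filter Topology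

/-- The group `ℤ^d`. -/
abbrev Zd (d : ℕ) := Fin d → ℤ

/-- The `ℓ¹`-distance on `ℤ^d`. -/
def distZ {d : ℕ} (v w : Zd d) : ℕ := ∑ i, (v i - w i).natAbs

/-- The translation action `τ̃_g Λ = Λ - g` on finite subsets of `ℤ^d`. -/
def translateZ {d : ℕ} (g : Zd d) (Λ : Finset (Zd d)) : Finset (Zd d) :=
  Λ.image (fun v => v - g)

/-- The (two-sided) `r`-boundary of a finite set `Λ ⊆ ℤ^d`. -/
def rBoundaryZ {d : ℕ} (r : ℕ) (Λ : Finset (Zd d)) : Set (Zd d) :=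
  {x | x ∉ Λ ∧ ∃ v ∈ Λ, distZ x v ≤ r} ∪ {v | v ∈ Λ ∧ ∃ x, x ∉ Λ ∧ distZ v x ≤ r}

/-- A Følner sequence in `ℤ^d`: nonempty finite sets whose `r`-boundary is
asymptotically negligible compared to the volume, for every `r > 0`. -/
def IsFolnerZ {d : ℕ} (Q : ℕ → Finset (Zd d)) : Prop :=
  (∀ j, (Q j).Nonempty) ∧
  ∀ r : ℕ, 0 < r →
    Tendsto (fun j => ((rBoundaryZ r (Q j)).ncard : ℝ) / (Q j).card) atTop (nhds 0)

/-- A boundary term on the finite subsets of `ℤ^d`. -/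
structure BoundaryTermZ (d : ℕ) where
  b : Finset (Zd d) → ℝ
  nonneg : ∀ Λ, 0 ≤ b Λ
  invariant : ∀ g Λ, b (translateZ g Λ) = b Λ
  folner : ∀ Q : ℕ → Finset (Zd d), IsFolnerZ Q →
    Tendsto (fun j => b (Q j) / (Q j).card) atTop (nhds 0)
  bounded : ∃ D : ℝ, ∀ Λ : Finset (Zd d), Λ.Nonempty → b Λ ≤ D * Λ.card
  union_le : ∀ Λ Λ', b (Λ ∪ Λ') ≤ b Λ + b Λ'
  inter_le : ∀ Λ Λ', b (Λ ∩ Λ') ≤ b Λ + b Λ'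
  sdiff_le : ∀ Λ Λ', b (Λ \ Λ') ≤ b Λ + b Λ'

/-- The bound `D_b` of a boundary term. -/
noncomputable def BoundaryTermZ.D {d : ℕ} (b : BoundaryTermZ d) : ℝ :=
  sSup {x | ∃ Λ : Finset (Zd d), Λ.Nonempty ∧ x = b.b Λ / Λ.card}

/-- Two patterns (given as total functions restricted to their domains) are
equivalent iff one is a translate of the other:  `P' |_{Λ'}` is the
`g`-translate of `P |_Λ`. -/
def PatEquivZ {d : ℕ} {A : Type*} (Λ : Finset (Zd d)) (P : Zd d → A)
    (Λ' : Finset (Zd d)) (P' : Zd d → A) : Prop :=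
  ∃ g : Zd d, Λ' = translateZ g Λ ∧ ∀ v ∈ Λ, P' (v - g) = P v

open Classical in
/-- `♯_P P'`: the number of occurrences of (translates of) the pattern `P|_Λ`
in the pattern `P'|_{Λ'}`. -/
noncomputable def sharpZ {d : ℕ} {A : Type*} (Λ : Finset (Zd d)) (P : Zd d → A)
    (Λ' : Finset (Zd d)) (P' : Zd d → A) : ℕ :=
  (Λ'.powerset.filter (fun Λ'' => PatEquivZ Λ P Λ'' P')).card

/-- Almost additivity of a field with respect to a boundary term. -/
def AlmostAdditiveZ {d : ℕ} {B : Type*} [NormedAddCommGroup B]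
    (F : Finset (Zd d) → B) (b : BoundaryTermZ d) : Prop :=
  ∀ (n : ℕ) (Λs : Fin n → Finset (Zd d)),
    (∀ i j, i ≠ j → Disjoint (Λs i) (Λs j)) →
    ‖F (Finset.univ.biUnion Λs) - ∑ i, F (Λs i)‖ ≤ ∑ i, b.b (Λs i)

/-- `ω`-invariance of a field. -/
def InvariantZ {d : ℕ} {A : Type*} {B : Type*} (ω : Zd d → A)
    (F : Finset (Zd d) → B) : Prop :=
  ∀ Λ Λ' : Finset (Zd d), PatEquivZ Λ ω Λ' ω → F Λ = F Λ'

/-- `Ft` is the pattern function of the `ω`-invariant field `F`. -/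
def IsPatternFnZ {d : ℕ} {A : Type*} {B : Type*} [Zero B] (ω : Zd d → A)
    (F : Finset (Zd d) → B) (Ft : Finset (Zd d) → (Zd d → A) → B) : Prop :=
  (∀ (Λ : Finset (Zd d)) (P : Zd d → A) (Λ' : Finset (Zd d)),
      PatEquivZ Λ P Λ' ω → Ft Λ P = F Λ') ∧
  (∀ (Λ : Finset (Zd d)) (P : Zd d → A),
      (∀ Λ' : Finset (Zd d), ¬ PatEquivZ Λ P Λ' ω) → Ft Λ P = 0)

/-- Extension of a pattern `P : Λ → A` to a total function on `ℤ^d`,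
filling in with the coloring `ω` off `Λ` (the quantities below only depend on
the restriction to `Λ`). -/
def extendPatZ {d : ℕ} {A : Type*} (ω : Zd d → A) (Λ : Finset (Zd d))
    (P : {x // x ∈ Λ} → A) : Zd d → A :=
  fun v => if h : v ∈ Λ then P ⟨v, h⟩ else ω v

/-- The cube `Λ_L = ([0,L) ∩ ℤ)^d`. -/
noncomputable def stdCube (d L : ℕ) : Finset (Zd d) :=
  Fintype.piFinset (fun _ => Finset.Ico (0 : ℤ) (L : ℤ))
section Aux
variable {d : ℕ}

lemma mem_translateZ {g v : Zd d} {Λ : Finset (Zd d)} :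
    v ∈ translateZ g Λ ↔ v + g ∈ Λ := by
  constructor
  · rintro h
    obtain ⟨w, hw, rfl⟩ := Finset.mem_image.1 h
    simpa using hw
  · intro h
    exact Finset.mem_image.2 ⟨v + g, h, by abel⟩

lemma card_translateZ (g : Zd d) (Λ : Finset (Zd d)) :
    (translateZ g Λ).card = Λ.card :=
  Finset.card_image_of_injective _ (fun a a' h => by simpa using sub_left_injective h)

lemma sum_translateZ (g : Zd d) (Λ : Finset (Zd d)) :
    ∑ v ∈ translateZ g Λ, v = (∑ v ∈ Λ, v) - Λ.card • g := by
  rw [translateZ, Finset.sum_image (by intro a _ a' _ h; simpa using sub_left_injective h)]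
  rw [Finset.sum_sub_distrib]
  simp

lemma translateZ_injective {Λ : Finset (Zd d)} (hΛ : Λ.Nonempty) {g g' : Zd d}
    (h : translateZ g Λ = translateZ g' Λ) : g = g' := by
  have := congrArg (fun s : Finset (Zd d) => ∑ v ∈ s, v) h
  simp only [sum_translateZ] at this
  have h2 : Λ.card • g = Λ.card • g' := sub_right_injective this
  have hc : Λ.card ≠ 0 := Finset.card_ne_zero_of_mem hΛ.choose_spec
  exact smul_right_injective _ hc h2

lemma mem_stdCube {L : ℕ} {v : Zd d} :
    v ∈ stdCube d L ↔ ∀ i, 0 ≤ v i ∧ v i < L := by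
  simp [stdCube, Fintype.mem_piFinset, Finset.mem_Ico]

lemma card_stdCube (L : ℕ) : (stdCube d L).card = L ^ d := by
  simp [stdCube, Fintype.card_piFinset]

lemma zero_mem_stdCube {L : ℕ} (hL : 1 ≤ L) : (0 : Zd d) ∈ stdCube d L := by
  rw [mem_stdCube]
  intro i
  simp only [Pi.zero_apply]
  exact ⟨le_refl _, by exact_mod_cast hL⟩

lemma stdCube_nonempty {L : ℕ} (hL : 1 ≤ L) : (stdCube d L).Nonempty :=
  ⟨0, zero_mem_stdCube hL⟩

end Aux
section Aux2
variable {d : ℕ}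

lemma distZ_coord_le {v w : Zd d} {r : ℕ} (h : distZ v w ≤ r) (i : Fin d) :
    (v i - w i).natAbs ≤ r :=
  le_trans (Finset.single_le_sum (f := fun i => (v i - w i).natAbs)
    (fun _ _ => Nat.zero_le _) (Finset.mem_univ i)) h

lemma ball_finite (Λ : Finset (Zd d)) (r : ℕ) :
    {x : Zd d | ∃ v ∈ Λ, distZ x v ≤ r}.Finite := by
  have : {x : Zd d | ∃ v ∈ Λ, distZ x v ≤ r} ⊆
      ⋃ v ∈ Λ, ↑(Fintype.piFinset (fun i => Finset.Icc (v i - r) (v i + r))) := by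
    rintro x ⟨v, hv, hx⟩
    refine Set.mem_biUnion hv ?_
    simp only [Finset.mem_coe, Fintype.mem_piFinset, Finset.mem_Icc]
    intro i
    have := distZ_coord_le hx i
    have habs : |x i - v i| ≤ (r : ℤ) := by
      rw [Int.abs_eq_natAbs]; exact_mod_cast this
    rw [abs_le] at habs
    constructor <;> linarith [habs.1, habs.2]
  exact Set.Finite.subset (Set.Finite.biUnion Λ.finite_toSet
    (fun v _ => (Fintype.piFinset _).finite_toSet)) this

lemma rBoundary_subset_ball (r : ℕ) (Λ : Finset (Zd d)) :
    rBoundaryZ r Λ ⊆ {x : Zd d | ∃ v ∈ Λ, distZ x v ≤ r} := by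
  rintro x (⟨_, hv⟩ | ⟨hx, _⟩)
  · exact hv
  · exact ⟨x, hx, by simp [distZ]⟩

lemma rBoundary_finite (r : ℕ) (Λ : Finset (Zd d)) : (rBoundaryZ r Λ).Finite :=
  (ball_finite Λ r).subset (rBoundary_subset_ball r Λ)

lemma card_le_ncard_rBoundary {r : ℕ} {Λ S : Finset (Zd d)}
    (h : ↑S ⊆ rBoundaryZ r Λ) : S.card ≤ (rBoundaryZ r Λ).ncard := by
  rw [← Set.ncard_coe_finset]
  exact Set.ncard_le_ncard h (rBoundary_finite r Λ)

end Aux2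
section Aux3
variable {d : ℕ}

/-- Big cube `[-r, L-1+r]^d` containing the boundary. -/
noncomputable def bigCube (d : ℕ) (r L : ℕ) : Finset (Zd d) :=
  Fintype.piFinset (fun _ => Finset.Icc (-(r : ℤ)) ((L : ℤ) - 1 + r))

/-- Inner cube `[r, L-r)^d`. -/
noncomputable def innerCube (d : ℕ) (r L : ℕ) : Finset (Zd d) :=
  Fintype.piFinset (fun _ => Finset.Ico (r : ℤ) ((L : ℤ) - r))

lemma innerCube_subset_bigCube (r L : ℕ) :
    innerCube d r L ⊆ bigCube d r L := by
  intro y hy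
  simp only [innerCube, bigCube, Fintype.mem_piFinset, Finset.mem_Ico, Finset.mem_Icc] at *
  intro i
  have := hy i
  constructor <;> [linarith [this.1]; linarith [this.2]]

lemma rBoundary_stdCube_subset (r L : ℕ) :
    rBoundaryZ r (stdCube d L) ⊆ ↑(bigCube d r L \ innerCube d r L) := by
  rintro x (⟨hx, v, hv, hdist⟩ | ⟨hx, y, hy, hdist⟩)
  · rw [Finset.coe_sdiff]
    refine ⟨?_, ?_⟩
    · rw [mem_stdCube] at hv
      simp only [Finset.mem_coe, bigCube, Fintype.mem_piFinset, Finset.mem_Icc]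
      intro i
      have h1 := (hv i).1; have h2 := (hv i).2
      have habs : |x i - v i| ≤ (r : ℤ) := by
        rw [Int.abs_eq_natAbs]; exact_mod_cast distZ_coord_le hdist i
      rw [abs_le] at habs
      constructor <;> linarith [habs.1, habs.2]
    · -- x ∉ innerCube, since innerCube ⊆ stdCube
      intro hxin
      apply hx
      simp only [Finset.mem_coe, innerCube, Fintype.mem_piFinset, Finset.mem_Ico] at hxin
      rw [mem_stdCube]
      intro i
      have := hxin i
      have hr : (0:ℤ) ≤ (r:ℤ) := Int.natCast_nonneg r
      constructor <;> [linarith [this.1]; linarith [this.2]]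
  · rw [Finset.coe_sdiff]
    rw [mem_stdCube] at hx
    refine ⟨?_, ?_⟩
    · simp only [Finset.mem_coe, bigCube, Fintype.mem_piFinset, Finset.mem_Icc]
      intro i
      have h1 := (hx i).1; have h2 := (hx i).2
      constructor <;> [linarith; linarith]
    · intro hxin
      simp only [Finset.mem_coe, innerCube, Fintype.mem_piFinset, Finset.mem_Ico] at hxin
      apply hy
      rw [mem_stdCube]
      intro i
      have hi := hxin i
      have habs : |x i - y i| ≤ (r : ℤ) := by
        rw [Int.abs_eq_natAbs]; exact_mod_cast distZ_coord_le hdist i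
      rw [abs_le] at habs
      constructor <;> [linarith [habs.1, hi.1]; linarith [habs.2, hi.2]]

lemma ncard_rBoundary_stdCube_le (r L : ℕ) (h : 2 * r ≤ L) :
    ((rBoundaryZ r (stdCube d L)).ncard : ℝ) ≤ ((L + 2 * r) ^ d : ℕ) - ((L - 2 * r) ^ d : ℕ) := by
  have h1 : (rBoundaryZ r (stdCube d L)).ncard ≤ (bigCube d r L \ innerCube d r L).card := by
    rw [← Set.ncard_coe_finset]
    exact Set.ncard_le_ncard (rBoundary_stdCube_subset r L) (Finset.finite_toSet _)
  have hbig : (bigCube d r L).card = (L + 2 * r) ^ d := by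
    rw [bigCube, Fintype.card_piFinset, Finset.prod_const, Int.card_Icc,
      Finset.card_univ, Fintype.card_fin]
    congr 1
    omega
  have hin : (innerCube d r L).card = (L - 2 * r) ^ d := by
    rw [innerCube, Fintype.card_piFinset, Finset.prod_const, Int.card_Ico,
      Finset.card_univ, Fintype.card_fin]
    congr 1
    omega
  have h2 : (bigCube d r L \ innerCube d r L).card
      = (L + 2 * r) ^ d - (L - 2 * r) ^ d := by
    rw [Finset.card_sdiff_of_subset (innerCube_subset_bigCube r L), hbig, hin]
  have h3 : (L - 2*r)^d ≤ (L + 2*r)^d := Nat.pow_le_pow_left (by omega) d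
  calc ((rBoundaryZ r (stdCube d L)).ncard : ℝ) ≤ ((bigCube d r L \ innerCube d r L).card : ℝ) := by
        exact_mod_cast h1
    _ = (((L + 2 * r) ^ d : ℕ) : ℝ) - (((L - 2 * r) ^ d : ℕ) : ℝ) := by
        rw [h2]; push_cast [h3]; ring

end Aux3
section Aux4
variable {d : ℕ}

lemma ratio_tendsto_zero (r : ℕ) (d : ℕ) :
    Tendsto (fun L : ℕ => ((((L + 2*r) ^ d : ℕ) : ℝ) - (((L - 2*r) ^ d : ℕ) : ℝ)) / ((L:ℝ)^d))
      atTop (nhds 0) := by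
  have key : Tendsto (fun L : ℕ => ((1 + (2*r:ℝ)/L) ^ d - (1 - (2*r:ℝ)/L) ^ d))
      atTop (nhds 0) := by
    have h0 : Tendsto (fun L : ℕ => (2*r:ℝ)/L) atTop (nhds 0) :=
      tendsto_const_div_atTop_nhds_zero_nat _
    have h1 : Tendsto (fun L : ℕ => (1 + (2*r:ℝ)/L) ^ d) atTop (nhds 1) := by
      have := ((tendsto_const_nhds (x := (1:ℝ))).add h0).pow d
      simpa using this
    have h2 : Tendsto (fun L : ℕ => (1 - (2*r:ℝ)/L) ^ d) atTop (nhds 1) := by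
      have := ((tendsto_const_nhds (x := (1:ℝ))).sub h0).pow d
      simpa using this
    simpa using h1.sub h2
  apply key.congr'
  filter_upwards [eventually_ge_atTop (2*r + 1)] with L hL
  have hL0 : (0:ℝ) < L := by exact_mod_cast (by omega : 0 < L)
  have hLne : (L:ℝ) ≠ 0 := ne_of_gt hL0
  have hsub : ((L - 2*r : ℕ) : ℝ) = (L:ℝ) - 2*r := by
    have h2r : 2*r ≤ L := by omega
    push_cast [h2r]; ring
  have e1 : (1 + (2*r:ℝ)/L) = ((L:ℝ) + 2*r)/L := by field_simp
  have e2 : (1 - (2*r:ℝ)/L) = ((L:ℝ) - 2*r)/L := by field_simp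
  rw [e1, e2, div_pow, div_pow, ← sub_div]
  push_cast [hsub]
  ring

lemma stdCube_folner (d : ℕ) : IsFolnerZ (fun n : ℕ => stdCube d (n + 1)) := by
  refine ⟨fun n => stdCube_nonempty (by omega), fun r hr => ?_⟩
  have hb' : Tendsto ((fun L : ℕ => ((((L + 2*r) ^ d : ℕ) : ℝ) - (((L - 2*r) ^ d : ℕ) : ℝ))
      / ((L:ℝ)^d)) ∘ (fun n => n + 1)) atTop (nhds 0) :=
    (ratio_tendsto_zero r d).comp (tendsto_add_atTop_nat 1)
  refine squeeze_zero' ?_ ?_ hb'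
  · filter_upwards with n
    positivity
  · filter_upwards [eventually_ge_atTop (2*r)] with n hn
    have h1 := ncard_rBoundary_stdCube_le (d := d) r (n+1) (by omega)
    simp only [Function.comp]
    rw [card_stdCube, Nat.cast_pow]
    gcongr

lemma folner_card_atTop (hd : 1 ≤ d) {Q : ℕ → Finset (Zd d)} (hQ : IsFolnerZ Q) :
    Tendsto (fun j => (Q j).card) atTop atTop := by
  have hone : ∀ j, 1 ≤ (rBoundaryZ 1 (Q j)).ncard := by
    intro j
    obtain ⟨v, hv, hmax⟩ := (Q j).exists_max_image (fun w => w ⟨0, hd⟩) (hQ.1 j)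
    set i0 : Fin d := ⟨0, hd⟩
    set x : Zd d := Function.update v i0 (v i0 + 1) with hxdef
    have hxQ : x ∉ Q j := by
      intro hx
      have := hmax x hx
      simp [x, Function.update_self] at this
    have hdist : distZ v x ≤ 1 := by
      rw [distZ]
      have hco : ∀ i, (v i - x i).natAbs = if i = i0 then 1 else 0 := by
        intro i
        by_cases h : i = i0
        · subst h; rw [if_pos rfl]; simp [x, Function.update_self]
        · rw [if_neg h]; simp [x, Function.update_of_ne h]
      rw [Finset.sum_congr rfl (fun i _ => hco i)]
      simp
    have hmem : v ∈ rBoundaryZ 1 (Q j) := Or.inr ⟨hv, x, hxQ, hdist⟩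
    have hfin := rBoundary_finite 1 (Q j)
    exact (Set.ncard_pos hfin).2 ⟨v, hmem⟩
  rw [tendsto_atTop]
  intro N
  have h2 := hQ.2 1 one_pos
  rw [Metric.tendsto_atTop] at h2
  obtain ⟨j0, hj0⟩ := h2 (1 / (N + 1)) (by positivity)
  filter_upwards [eventually_ge_atTop j0] with j hj
  have hcard : 0 < (Q j).card := Finset.card_pos.2 (hQ.1 j)
  have hcardR : (0:ℝ) < (Q j).card := by exact_mod_cast hcard
  have hd2 := hj0 j hj
  rw [Real.dist_eq, sub_zero] at hd2
  have hle : 1 / ((Q j).card : ℝ) ≤ ((rBoundaryZ 1 (Q j)).ncard : ℝ) / (Q j).card := by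
    gcongr
    exact_mod_cast hone j
  have habs : ((rBoundaryZ 1 (Q j)).ncard : ℝ) / (Q j).card < 1 / (N+1) :=
    lt_of_le_of_lt (le_abs_self _) hd2
  have hlt : 1 / ((Q j).card : ℝ) < 1 / (N + 1) := lt_of_le_of_lt hle habs
  have hN : (N : ℝ) + 1 < (Q j).card := by
    rw [div_lt_div_iff₀ (by positivity) (by positivity)] at hlt
    linarith
  have : (N:ℝ) ≤ ((Q j).card : ℝ) := by linarith
  exact_mod_cast this
end Aux4
section Core
variable {d : ℕ}

/-- The set of translations `g` whose cell `Λ_L - g` lies inside `Q`. -/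
noncomputable def cellT (d L : ℕ) (Q : Finset (Zd d)) : Finset (Zd d) :=
  (Q.image (fun v => -v)).filter (fun g => translateZ g (stdCube d L) ⊆ Q)

lemma mem_cellT {L : ℕ} (hL : 1 ≤ L) {Q : Finset (Zd d)} {g : Zd d} :
    g ∈ cellT d L Q ↔ translateZ g (stdCube d L) ⊆ Q := by
  rw [cellT, Finset.mem_filter]
  constructor
  · exact fun h => h.2
  · intro h
    have hg : -g ∈ translateZ g (stdCube d L) :=
      mem_translateZ.2 (by simpa using zero_mem_stdCube hL)
    exact ⟨Finset.mem_image.2 ⟨-g, h hg, by simp⟩, h⟩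

lemma card_cellT_le (L : ℕ) (Q : Finset (Zd d)) : (cellT d L Q).card ≤ Q.card :=
  le_trans (Finset.card_filter_le _ _) Finset.card_image_le

/-- Reduction mod `L` in each coordinate. -/
def smodZ (L : ℕ) (g : Zd d) : Zd d := fun i => g i % (L : ℤ)

lemma smodZ_mem_stdCube {L : ℕ} (hL : 1 ≤ L) (g : Zd d) : smodZ L g ∈ stdCube d L := by
  rw [mem_stdCube]
  intro i
  have hL0 : (0:ℤ) < L := by exact_mod_cast hL
  exact ⟨Int.emod_nonneg _ (by omega), Int.emod_lt_of_pos _ hL0⟩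

lemma cells_disjoint {L : ℕ} {g g' : Zd d} (hne : g ≠ g')
    (hmod : smodZ L g = smodZ L g') :
    Disjoint (translateZ g (stdCube d L)) (translateZ g' (stdCube d L)) := by
  rw [Finset.disjoint_left]
  intro x hx hx'
  apply hne
  funext i
  rw [mem_translateZ, mem_stdCube] at hx hx'
  have h1 := hx i; have h2 := hx' i
  simp only [Pi.add_apply] at h1 h2
  have hdvd : (L:ℤ) ∣ (g i - g' i) := by
    have hh := congrFun hmod i
    simp only [smodZ] at hh
    exact Int.dvd_of_emod_eq_zero (Int.emod_eq_emod_iff_emod_sub_eq_zero.1 hh)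
  by_cases h : g i = g' i
  · exact h
  · exfalso
    have habs : |g i - g' i| < (L:ℤ) := by
      rw [abs_lt]; omega
    have hge : (L:ℤ) ≤ |g i - g' i| :=
      Int.le_of_dvd (abs_pos.2 (sub_ne_zero.2 h)) ((dvd_abs _ _).2 hdvd)
    omega

end Core
section Core2
variable {d : ℕ}

open Classical in
/-- Translations in `cellT` with prescribed residue `s` mod `L`. -/
noncomputable def cellTs (d L : ℕ) (Q : Finset (Zd d)) (s : Zd d) : Finset (Zd d) :=
  (cellT d L Q).filter (fun g => smodZ L g = s)

/-- The remainder of `Q` after removing the full cells with residue `s`. -/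
noncomputable def remS (d L : ℕ) (Q : Finset (Zd d)) (s : Zd d) : Finset (Zd d) :=
  Q \ (cellTs d L Q s).biUnion (fun g => translateZ g (stdCube d L))

lemma mem_cellTs {L : ℕ} {Q : Finset (Zd d)} {s g : Zd d} :
    g ∈ cellTs d L Q s ↔ g ∈ cellT d L Q ∧ smodZ L g = s := Finset.mem_filter

lemma cellTs_cell_subset {L : ℕ} {Q : Finset (Zd d)} {s g : Zd d}
    (hg : g ∈ cellTs d L Q s) : translateZ g (stdCube d L) ⊆ Q :=
  (Finset.mem_filter.1 (mem_cellTs.1 hg).1).2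

lemma remS_subset_boundary (hd : 1 ≤ d) {L : ℕ} (hL : 1 ≤ L) {Q : Finset (Zd d)}
    {s : Zd d} (hs : s ∈ stdCube d L) :
    ↑(remS d L Q s) ⊆ rBoundaryZ (d * L) Q := by
  intro x hx
  rw [Finset.mem_coe, remS, Finset.mem_sdiff] at hx
  obtain ⟨hxQ, hxU⟩ := hx
  have hL0 : (0:ℤ) < L := by exact_mod_cast hL
  rw [mem_stdCube] at hs
  set g : Zd d := fun i => (x i + s i) % (L:ℤ) - x i with hgdef
  have hxg : x ∈ translateZ g (stdCube d L) := by
    rw [mem_translateZ, mem_stdCube]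
    intro i
    have h1 : x i + g i = (x i + s i) % (L:ℤ) := by
      show x i + ((x i + s i) % (L:ℤ) - x i) = _; ring
    rw [Pi.add_apply, h1]
    exact ⟨Int.emod_nonneg _ (by omega), Int.emod_lt_of_pos _ hL0⟩
  have hsmod : smodZ L g = s := by
    funext i
    show g i % (L:ℤ) = s i
    have hme : ((x i + s i) % (L:ℤ) - x i) % (L:ℤ) = (x i + s i - x i) % (L:ℤ) :=
      Int.ModEq.sub (Int.emod_emod_of_dvd _ dvd_rfl) (Int.ModEq.refl (x i))
    have h2 : x i + s i - x i = s i := by ring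
    rw [hgdef]
    simp only []
    rw [hme, h2, Int.emod_eq_of_lt (hs i).1 (hs i).2]
  have hnot : ¬ translateZ g (stdCube d L) ⊆ Q := by
    intro hsub
    apply hxU
    exact Finset.mem_biUnion.2 ⟨g, mem_cellTs.2 ⟨(mem_cellT hL).2 hsub, hsmod⟩, hxg⟩
  obtain ⟨y, hyc, hyQ⟩ := Finset.not_subset.1 hnot
  refine Or.inr ⟨hxQ, y, hyQ, ?_⟩
  rw [mem_translateZ, mem_stdCube] at hxg hyc
  have hcoord : ∀ i, (x i - y i).natAbs ≤ L := by
    intro i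
    have h1 := hxg i; have h2 := hyc i
    simp only [Pi.add_apply] at h1 h2
    omega
  calc distZ x y ≤ ∑ _i : Fin d, L := Finset.sum_le_sum (fun i _ => hcoord i)
  _ = d * L := by simp [Finset.sum_const, mul_comm]

variable {B : Type*} [NormedAddCommGroup B]

lemma shift_estimate (F : Finset (Zd d) → B) (b : BoundaryTermZ d)
    (hAA : AlmostAdditiveZ F b) (L : ℕ) (Q : Finset (Zd d)) (s : Zd d) :
    ‖F Q - (F (remS d L Q s) + ∑ g ∈ cellTs d L Q s, F (translateZ g (stdCube d L)))‖
      ≤ b.b (remS d L Q s) + (cellTs d L Q s).card * b.b (stdCube d L) := by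
  classical
  set E := (cellTs d L Q s).equivFin with hE
  set Λs : Fin ((cellTs d L Q s).card + 1) → Finset (Zd d) :=
    Fin.cons (remS d L Q s) (fun i => translateZ (E.symm i : Zd d) (stdCube d L)) with hΛs
  have hRdisj : ∀ g ∈ cellTs d L Q s, Disjoint (remS d L Q s) (translateZ g (stdCube d L)) := by
    intro g hg
    rw [Finset.disjoint_left]
    intro x hx hxc
    exact (Finset.mem_sdiff.1 hx).2 (Finset.mem_biUnion.2 ⟨g, hg, hxc⟩)
  have hdisj : ∀ i j, i ≠ j → Disjoint (Λs i) (Λs j) := by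
    intro i j
    refine Fin.cases (motive := fun i => i ≠ j → Disjoint (Λs i) (Λs j)) ?_ ?_ i
    · refine Fin.cases (motive := fun j => (0 : Fin _) ≠ j → Disjoint (Λs 0) (Λs j)) ?_ ?_ j
      · intro h; exact absurd rfl h
      · intro j' _
        simp only [hΛs, Fin.cons_zero, Fin.cons_succ]
        exact hRdisj _ (E.symm j').2
    · intro i'
      refine Fin.cases (motive := fun j => i'.succ ≠ j → Disjoint (Λs i'.succ) (Λs j)) ?_ ?_ j
      · intro _
        simp only [hΛs, Fin.cons_zero, Fin.cons_succ]
        exact (hRdisj _ (E.symm i').2).symm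
      · intro j' hne
        simp only [hΛs, Fin.cons_succ]
        refine cells_disjoint ?_ ?_
        · intro h
          exact hne (congrArg Fin.succ (E.symm.injective (Subtype.ext h)))
        · rw [(mem_cellTs.1 (E.symm i').2).2, (mem_cellTs.1 (E.symm j').2).2]
  have hunion : Finset.univ.biUnion Λs = Q := by
    apply Finset.Subset.antisymm
    · intro x hx
      obtain ⟨i, -, hxi⟩ := Finset.mem_biUnion.1 hx
      revert hxi
      refine Fin.cases ?_ ?_ i
      · intro hxi
        exact (Finset.mem_sdiff.1 hxi).1
      · intro i' hxi
        simp only [hΛs, Fin.cons_succ] at hxi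
        exact cellTs_cell_subset (E.symm i').2 hxi
    · intro x hx
      by_cases hxb : x ∈ (cellTs d L Q s).biUnion (fun g => translateZ g (stdCube d L))
      · obtain ⟨g, hg, hxg⟩ := Finset.mem_biUnion.1 hxb
        refine Finset.mem_biUnion.2 ⟨Fin.succ (E ⟨g, hg⟩), Finset.mem_univ _, ?_⟩
        simp only [hΛs, Fin.cons_succ, Equiv.symm_apply_apply]
        exact hxg
      · exact Finset.mem_biUnion.2 ⟨0, Finset.mem_univ _, by
          simp only [hΛs, Fin.cons_zero]
          exact Finset.mem_sdiff.2 ⟨hx, hxb⟩⟩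
  have key := hAA ((cellTs d L Q s).card + 1) Λs hdisj
  rw [hunion] at key
  have hsumF : ∑ i, F (Λs i)
      = F (remS d L Q s) + ∑ g ∈ cellTs d L Q s, F (translateZ g (stdCube d L)) := by
    rw [Fin.sum_univ_succ]
    simp only [hΛs, Fin.cons_zero, Fin.cons_succ]
    congr 1
    rw [← Finset.sum_coe_sort (cellTs d L Q s) (fun g => F (translateZ g (stdCube d L)))]
    exact Equiv.sum_comp E.symm (fun g => F (translateZ (g : Zd d) (stdCube d L)))
  have hsumb : ∑ i, b.b (Λs i)
      = b.b (remS d L Q s) + (cellTs d L Q s).card * b.b (stdCube d L) := by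
    rw [Fin.sum_univ_succ]
    simp only [hΛs, Fin.cons_zero, Fin.cons_succ]
    congr 1
    have hbi : ∀ i : Fin (cellTs d L Q s).card,
        b.b (translateZ (E.symm i : Zd d) (stdCube d L)) = b.b (stdCube d L) :=
      fun i => b.invariant _ _
    rw [Finset.sum_congr rfl (fun i _ => hbi i)]
    simp [mul_comm]
  rw [hsumF, hsumb] at key
  exact key

end Core2
section Core3
variable {d : ℕ} {B : Type*} [NormedAddCommGroup B]

lemma F_empty (F : Finset (Zd d) → B) (b : BoundaryTermZ d)
    (hAA : AlmostAdditiveZ F b) : F ∅ = 0 := by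
  have := hAA 0 (fun i => i.elim0) (fun i => i.elim0)
  simp only [Finset.sum_empty, Fin.sum_univ_zero, sub_zero] at this
  have h0 : (Finset.univ.biUnion fun i : Fin 0 => i.elim0) = (∅ : Finset (Zd d)) := by
    simp
  rw [h0] at this
  simpa using norm_le_zero_iff.1 (by simpa using this)

lemma global_estimate (hd : 1 ≤ d) (F : Finset (Zd d) → B) (b : BoundaryTermZ d)
    (hAA : AlmostAdditiveZ F b) {C D : ℝ} (hC0 : 0 ≤ C) (hD0 : 0 ≤ D)
    (hC : ∀ Λ : Finset (Zd d), Λ.Nonempty → ‖F Λ‖ ≤ C * Λ.card)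
    (hD : ∀ Λ : Finset (Zd d), Λ.Nonempty → b.b Λ ≤ D * Λ.card)
    {L : ℕ} (hL : 1 ≤ L) (Q : Finset (Zd d)) :
    ‖(stdCube d L).card • F Q - ∑ g ∈ cellT d L Q, F (translateZ g (stdCube d L))‖
      ≤ Q.card * b.b (stdCube d L)
        + (stdCube d L).card * ((C + D) * (rBoundaryZ (d * L) Q).ncard + b.b ∅) := by
  classical
  set β : ℝ := ((rBoundaryZ (d * L) Q).ncard : ℝ) with hβ
  have hβ0 : 0 ≤ β := by positivity
  have hrem : ∀ s ∈ stdCube d L, ((remS d L Q s).card : ℝ) ≤ β := by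
    intro s hs
    rw [hβ]
    exact_mod_cast card_le_ncard_rBoundary (remS_subset_boundary hd hL hs)
  -- decomposition
  have hdecomp : (stdCube d L).card • F Q - ∑ g ∈ cellT d L Q, F (translateZ g (stdCube d L))
      = (∑ s ∈ stdCube d L,
          (F Q - (F (remS d L Q s) + ∑ g ∈ cellTs d L Q s, F (translateZ g (stdCube d L)))))
        + ∑ s ∈ stdCube d L, F (remS d L Q s) := by
    rw [Finset.sum_sub_distrib]
    rw [Finset.sum_const]
    have hfib : ∑ s ∈ stdCube d L, ∑ g ∈ cellTs d L Q s, F (translateZ g (stdCube d L))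
        = ∑ g ∈ cellT d L Q, F (translateZ g (stdCube d L)) := by
      exact Finset.sum_fiberwise_of_maps_to (fun g hg => smodZ_mem_stdCube hL (g := g)) _
    rw [Finset.sum_add_distrib, hfib]
    abel
  rw [hdecomp]
  have h1 : ‖(∑ s ∈ stdCube d L,
          (F Q - (F (remS d L Q s) + ∑ g ∈ cellTs d L Q s, F (translateZ g (stdCube d L)))))
        + ∑ s ∈ stdCube d L, F (remS d L Q s)‖
      ≤ (∑ s ∈ stdCube d L, (b.b (remS d L Q s) + (cellTs d L Q s).card * b.b (stdCube d L)))
        + ∑ s ∈ stdCube d L, ‖F (remS d L Q s)‖ := by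
    refine le_trans (norm_add_le _ _) (add_le_add ?_ (norm_sum_le _ _))
    refine le_trans (norm_sum_le _ _) (Finset.sum_le_sum ?_)
    intro s _
    exact shift_estimate F b hAA L Q s
  refine h1.trans ?_
  have hFrem : ∀ s ∈ stdCube d L, ‖F (remS d L Q s)‖ ≤ C * β := by
    intro s hs
    rcases Finset.eq_empty_or_nonempty (remS d L Q s) with h | h
    · rw [h, F_empty F b hAA]
      simpa using mul_nonneg hC0 hβ0
    · exact (hC _ h).trans (by
        have := hrem s hs
        nlinarith [hrem s hs])
  have hbrem : ∀ s ∈ stdCube d L, b.b (remS d L Q s) ≤ D * β + b.b ∅ := by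
    intro s hs
    rcases Finset.eq_empty_or_nonempty (remS d L Q s) with h | h
    · rw [h]
      nlinarith [b.nonneg (∅ : Finset (Zd d))]
    · have h2 := (hD _ h)
      have h3 := hrem s hs
      nlinarith [b.nonneg (∅ : Finset (Zd d))]
  have hcards : ∑ s ∈ stdCube d L, ((cellTs d L Q s).card : ℝ) = (cellT d L Q).card := by
    have hnat : ∑ s ∈ stdCube d L, (cellTs d L Q s).card = (cellT d L Q).card := by
      simp only [Finset.card_eq_sum_ones]
      exact Finset.sum_fiberwise_of_maps_to (fun g _ => smodZ_mem_stdCube hL g) _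
    exact_mod_cast hnat
  have e1 : ∑ s ∈ stdCube d L,
        (b.b (remS d L Q s) + (cellTs d L Q s).card * b.b (stdCube d L))
      = (∑ s ∈ stdCube d L, b.b (remS d L Q s))
        + ((cellT d L Q).card : ℝ) * b.b (stdCube d L) := by
    rw [Finset.sum_add_distrib, ← Finset.sum_mul, hcards]
  have e2 : (∑ s ∈ stdCube d L, b.b (remS d L Q s))
      ≤ (stdCube d L).card * (D * β + b.b ∅) :=
    calc (∑ s ∈ stdCube d L, b.b (remS d L Q s))
        ≤ ∑ _s ∈ stdCube d L, (D * β + b.b ∅) := Finset.sum_le_sum hbrem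
    _ = _ := by rw [Finset.sum_const, nsmul_eq_mul]
  have e3 : ∑ s ∈ stdCube d L, ‖F (remS d L Q s)‖ ≤ (stdCube d L).card * (C * β) :=
    calc ∑ s ∈ stdCube d L, ‖F (remS d L Q s)‖
        ≤ ∑ _s ∈ stdCube d L, (C * β) := Finset.sum_le_sum hFrem
    _ = _ := by rw [Finset.sum_const, nsmul_eq_mul]
  have e4 : ((cellT d L Q).card : ℝ) * b.b (stdCube d L)
      ≤ (Q.card : ℝ) * b.b (stdCube d L) := by
    apply mul_le_mul_of_nonneg_right _ (b.nonneg _)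
    exact_mod_cast card_cellT_le L Q
  have e5 : ((stdCube d L).card : ℝ) * ((C + D) * β + b.b ∅)
      = ((stdCube d L).card : ℝ) * (D * β + b.b ∅) + ((stdCube d L).card : ℝ) * (C * β) := by
    ring
  rw [e1]
  linarith [e2, e3, e4, e5]

end Core3
section Core4
variable {d : ℕ} {A : Type*} [Fintype A] {B : Type*} [NormedAddCommGroup B]

open Classical in
lemma sharp_eq_card_filter (ω : Zd d → A) {L : ℕ} (hL : 1 ≤ L) (Q : Finset (Zd d))
    (P' : Zd d → A) :
    sharpZ (stdCube d L) P' Q ω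
      = ((cellT d L Q).filter (fun g => ∀ v ∈ stdCube d L, ω (v - g) = P' v)).card := by
  classical
  rw [sharpZ]
  symm
  apply Finset.card_bij (fun g _ => translateZ g (stdCube d L))
  · intro g hg
    rw [Finset.mem_filter] at hg ⊢
    refine ⟨Finset.mem_powerset.2 ((mem_cellT hL).1 hg.1), g, rfl, hg.2⟩
  · intro g hg g' hg' h
    exact translateZ_injective (stdCube_nonempty hL) h
  · intro Λ'' hΛ''
    rw [Finset.mem_filter] at hΛ''
    obtain ⟨hpow, g, hgeq, hgmatch⟩ := hΛ''
    refine ⟨g, Finset.mem_filter.2 ⟨(mem_cellT hL).2 ?_, hgmatch⟩, hgeq.symm⟩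
    rw [← hgeq]
    exact Finset.mem_powerset.1 hpow

lemma pattern_sum (ω : Zd d → A) (F : Finset (Zd d) → B)
    (Ft : Finset (Zd d) → (Zd d → A) → B) (hFt : IsPatternFnZ ω F Ft)
    {L : ℕ} (hL : 1 ≤ L) (Q : Finset (Zd d)) :
    ∑ P : {x // x ∈ stdCube d L} → A,
      (sharpZ (stdCube d L) (extendPatZ ω (stdCube d L) P) Q ω)
        • Ft (stdCube d L) (extendPatZ ω (stdCube d L) P)
      = ∑ g ∈ cellT d L Q, F (translateZ g (stdCube d L)) := by
  classical
  have step1 : ∀ P : {x // x ∈ stdCube d L} → A,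
      (sharpZ (stdCube d L) (extendPatZ ω (stdCube d L) P) Q ω)
        • Ft (stdCube d L) (extendPatZ ω (stdCube d L) P)
      = ∑ g ∈ cellT d L Q,
          if (∀ v ∈ stdCube d L, ω (v - g) = extendPatZ ω (stdCube d L) P v)
          then Ft (stdCube d L) (extendPatZ ω (stdCube d L) P) else 0 := by
    intro P
    rw [sharp_eq_card_filter ω hL Q, ← Finset.sum_filter, Finset.sum_const]
  rw [Finset.sum_congr rfl (fun P _ => step1 P), Finset.sum_comm]
  apply Finset.sum_congr rfl
  intro g hg
  set P₀ : {x // x ∈ stdCube d L} → A := fun v => ω ((v : Zd d) - g) with hP₀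
  have hext : ∀ v ∈ stdCube d L, extendPatZ ω (stdCube d L) P₀ v = ω (v - g) := by
    intro v hv
    rw [extendPatZ, dif_pos hv]
  rw [Fintype.sum_eq_single P₀]
  · rw [if_pos (fun v hv => (hext v hv).symm)]
    exact hFt.1 _ _ _ ⟨g, rfl, fun v hv => (hext v hv).symm⟩
  · intro P hP
    rw [if_neg]
    intro hcond
    apply hP
    funext x
    have := hcond x.1 x.2
    rw [extendPatZ, dif_pos x.2] at this
    exact this.symm
  end Core4

lemma aux_alg (c1 c2 X Y : ℝ) (h1 : c1 ≠ 0) (h2 : c2 ≠ 0) :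
    (c1 * c2)⁻¹ * (c2 * X + c1 * Y) = X / c1 + Y / c2 := by
  field_simp

set_option maxHeartbeats 1000000 in
/-- **Theorem (Lenz–Müller–Veselić; existence of the thermodynamic limit for
finitely many colors on `ℤ^d`).**  For a finite color set `A`, a coloring
`ω ∈ A^{ℤ^d}`, a Banach space `B`, a Følner sequence `(Q_j)`, and a bounded,
`ω`-invariant, almost additive field `F` all of whose pattern frequencies
`ν_P` along `(Q_j)` exist, the limits
`F̄ = lim_j F(Q_j)/|Q_j| = lim_L Σ_{P ∈ A^{Λ_L}} ν_P F̃(P)/|Λ_L|`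
exist and are equal. -/
theorem stmt1 {d : ℕ} (hd : 1 ≤ d) {A : Type*} [Fintype A] (ω : Zd d → A)
    {B : Type*} [NormedAddCommGroup B] [NormedSpace ℝ B] [CompleteSpace B]
    (Q : ℕ → Finset (Zd d)) (hQ : IsFolnerZ Q)
    (F : Finset (Zd d) → B) (b : BoundaryTermZ d)
    (hAA : AlmostAdditiveZ F b) (hInv : InvariantZ ω F)
    (hBd : ∃ C : ℝ, ∀ Λ : Finset (Zd d), Λ.Nonempty → ‖F Λ‖ ≤ C * Λ.card)
    (Ft : Finset (Zd d) → (Zd d → A) → B) (hFt : IsPatternFnZ ω F Ft)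
    (ν : Finset (Zd d) → (Zd d → A) → ℝ)
    (hν : ∀ (Λ : Finset (Zd d)) (P : Zd d → A),
      Tendsto (fun j => (sharpZ Λ P (Q j) ω : ℝ) / (Q j).card) atTop (nhds (ν Λ P))) :
    ∃ Fbar : B,
      Tendsto (fun j => ((Q j).card : ℝ)⁻¹ • F (Q j)) atTop (nhds Fbar) ∧
      Tendsto (fun L => ∑ P : {x // x ∈ stdCube d L} → A,
          ν (stdCube d L) (extendPatZ ω (stdCube d L) P) •
            (((stdCube d L).card : ℝ)⁻¹ • Ft (stdCube d L) (extendPatZ ω (stdCube d L) P)))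
        atTop (nhds Fbar) := by
  classical
  obtain ⟨C₀, hC₀⟩ := hBd
  obtain ⟨D₀, hD₀⟩ := b.bounded
  set C : ℝ := max C₀ 0 with hCdef
  set D : ℝ := max D₀ 0 with hDdef
  have hC0 : 0 ≤ C := le_max_right _ _
  have hD0 : 0 ≤ D := le_max_right _ _
  have hC : ∀ Λ : Finset (Zd d), Λ.Nonempty → ‖F Λ‖ ≤ C * Λ.card := fun Λ hΛ =>
    (hC₀ Λ hΛ).trans (mul_le_mul_of_nonneg_right (le_max_left _ _) (Nat.cast_nonneg _))
  have hD : ∀ Λ : Finset (Zd d), Λ.Nonempty → b.b Λ ≤ D * Λ.card := fun Λ hΛ =>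
    (hD₀ Λ hΛ).trans (mul_le_mul_of_nonneg_right (le_max_left _ _) (Nat.cast_nonneg _))
  set aseq : ℕ → B := fun j => ((Q j).card : ℝ)⁻¹ • F (Q j) with haseq
  set Sseq : ℕ → B := fun L => ∑ P : {x // x ∈ stdCube d L} → A,
      ν (stdCube d L) (extendPatZ ω (stdCube d L) P) •
        (((stdCube d L).card : ℝ)⁻¹ • Ft (stdCube d L) (extendPatZ ω (stdCube d L) P))
    with hSseq
  set δ : ℕ → ℝ := fun L => b.b (stdCube d L) / ((stdCube d L).card : ℝ) with hδ
  have hQpos : ∀ j, (0:ℝ) < ((Q j).card : ℝ) := fun j => by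
    exact_mod_cast Finset.card_pos.2 (hQ.1 j)
  -- the approximants
  set Aseq : ℕ → ℕ → B := fun L j => ∑ P : {x // x ∈ stdCube d L} → A,
      ((sharpZ (stdCube d L) (extendPatZ ω (stdCube d L) P) (Q j) ω : ℝ) / ((Q j).card : ℝ)) •
        (((stdCube d L).card : ℝ)⁻¹ • Ft (stdCube d L) (extendPatZ ω (stdCube d L) P))
    with hAseq
  have hAtendsto : ∀ L : ℕ, Tendsto (fun j => Aseq L j) atTop (nhds (Sseq L)) := by
    intro L
    apply tendsto_finset_sum
    intro P _
    exact (hν (stdCube d L) (extendPatZ ω (stdCube d L) P)).smul_const _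
  -- the deterministic estimate
  have hstep : ∀ L : ℕ, 1 ≤ L → ∀ j : ℕ,
      ‖aseq j - Aseq L j‖ ≤ δ L
        + ((C + D) * ((rBoundaryZ (d * L) (Q j)).ncard : ℝ) + b.b ∅) / ((Q j).card : ℝ) := by
    intro L hL j
    have hglob := global_estimate hd F b hAA hC0 hD0 hC hD hL (Q j)
    have hpat := pattern_sum ω F Ft hFt hL (Q j)
    have hc1 : (0:ℝ) < ((stdCube d L).card : ℝ) := by
      rw [card_stdCube]
      positivity
    have hc2 := hQpos j
    set c1 : ℝ := ((stdCube d L).card : ℝ)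
    set c2 : ℝ := ((Q j).card : ℝ)
    have hsmul : aseq j - Aseq L j = ((c1 * c2)⁻¹) •
        ((stdCube d L).card • F (Q j)
          - ∑ g ∈ cellT d L (Q j), F (translateZ g (stdCube d L))) := by
      rw [smul_sub]
      have h1 : (c1 * c2)⁻¹ • ((stdCube d L).card • F (Q j)) = aseq j := by
        rw [← Nat.cast_smul_eq_nsmul ℝ, smul_smul]
        have hs : (c1 * c2)⁻¹ * ((stdCube d L).card : ℝ) = c2⁻¹ := by
          rw [mul_inv]
          field_simp
          rfl
        rw [hs]
      have h2 : (c1 * c2)⁻¹ • (∑ g ∈ cellT d L (Q j), F (translateZ g (stdCube d L)))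
          = Aseq L j := by
        rw [← hpat, Finset.smul_sum]
        apply Finset.sum_congr rfl
        intro P _
        rw [← Nat.cast_smul_eq_nsmul ℝ
          (sharpZ (stdCube d L) (extendPatZ ω (stdCube d L) P) (Q j) ω), smul_smul, smul_smul]
        have hs2 : (c1 * c2)⁻¹
              * ((sharpZ (stdCube d L) (extendPatZ ω (stdCube d L) P) (Q j) ω : ℝ))
            = ((sharpZ (stdCube d L) (extendPatZ ω (stdCube d L) P) (Q j) ω : ℝ) / c2)
              * c1⁻¹ := by
          rw [mul_inv]
          ring
        rw [hs2]
      rw [h1, h2]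
    calc ‖aseq j - Aseq L j‖
        = (c1 * c2)⁻¹ * ‖(stdCube d L).card • F (Q j)
            - ∑ g ∈ cellT d L (Q j), F (translateZ g (stdCube d L))‖ := by
          rw [hsmul, norm_smul, Real.norm_eq_abs, abs_of_pos (by positivity)]
      _ ≤ (c1 * c2)⁻¹ * (c2 * b.b (stdCube d L)
            + c1 * ((C + D) * ((rBoundaryZ (d * L) (Q j)).ncard : ℝ) + b.b ∅)) := by
          apply mul_le_mul_of_nonneg_left _ (by positivity)
          exact_mod_cast hglob
      _ = δ L + ((C + D) * ((rBoundaryZ (d * L) (Q j)).ncard : ℝ) + b.b ∅) / c2 := by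
          rw [hδ]
          exact aux_alg c1 c2 _ _ (ne_of_gt hc1) (ne_of_gt hc2)
  -- error terms tend to 0 in j
  have herr : ∀ L : ℕ, 1 ≤ L → Tendsto (fun j =>
      ((C + D) * ((rBoundaryZ (d * L) (Q j)).ncard : ℝ) + b.b ∅) / ((Q j).card : ℝ))
      atTop (nhds 0) := by
    intro L hL
    have h1 : Tendsto (fun j => ((rBoundaryZ (d * L) (Q j)).ncard : ℝ) / ((Q j).card : ℝ))
        atTop (nhds 0) := hQ.2 (d * L) (by positivity)
    have h2 : Tendsto (fun j => (((Q j).card : ℝ))⁻¹) atTop (nhds 0) := by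
      apply Tendsto.comp (tendsto_inv_atTop_zero)
      exact tendsto_natCast_atTop_atTop.comp (folner_card_atTop hd hQ)
    have h3 : Tendsto (fun j => (C + D) * (((rBoundaryZ (d * L) (Q j)).ncard : ℝ)
        / ((Q j).card : ℝ)) + b.b ∅ * (((Q j).card : ℝ))⁻¹) atTop (nhds 0) := by
      have := (h1.const_mul (C + D)).add (h2.const_mul (b.b ∅))
      simpa using this
    apply h3.congr
    intro j
    field_simp
  -- the key eventual estimate
  have key : ∀ L : ℕ, 1 ≤ L → ∀ ε : ℝ, 0 < ε →
      ∀ᶠ j in atTop, ‖aseq j - Sseq L‖ ≤ δ L + ε := by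
    intro L hL ε hε
    have hev1 : ∀ᶠ j in atTop, ‖Aseq L j - Sseq L‖ ≤ ε / 2 := by
      obtain ⟨N, hN⟩ := Metric.tendsto_atTop.1 (hAtendsto L) (ε/2) (by positivity)
      filter_upwards [eventually_ge_atTop N] with j hj
      have h := hN j hj
      rw [dist_eq_norm] at h
      exact h.le
    have hev2 : ∀ᶠ j in atTop,
        ((C + D) * ((rBoundaryZ (d * L) (Q j)).ncard : ℝ) + b.b ∅) / ((Q j).card : ℝ)
          ≤ ε / 2 := by
      obtain ⟨N, hN⟩ := Metric.tendsto_atTop.1 (herr L hL) (ε/2) (by positivity)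
      filter_upwards [eventually_ge_atTop N] with j hj
      have h := hN j hj
      rw [Real.dist_eq, sub_zero] at h
      exact (le_abs_self _).trans h.le
    filter_upwards [hev1, hev2] with j h1 h2
    calc ‖aseq j - Sseq L‖ ≤ ‖aseq j - Aseq L j‖ + ‖Aseq L j - Sseq L‖ := by
          have hh : aseq j - Sseq L = (aseq j - Aseq L j) + (Aseq L j - Sseq L) := by abel
          rw [hh]; exact norm_add_le _ _
      _ ≤ (δ L + ((C + D) * ((rBoundaryZ (d * L) (Q j)).ncard : ℝ) + b.b ∅)
            / ((Q j).card : ℝ)) + ε / 2 := add_le_add (hstep L hL j) h1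
      _ ≤ δ L + ε := by linarith
  -- δ tends to 0
  have hδ0 : Tendsto δ atTop (nhds 0) := by
    have h1 := b.folner (fun n => stdCube d (n + 1)) (stdCube_folner d)
    rw [← tendsto_add_atTop_iff_nat 1]
    exact h1
  have hδev : ∀ ε : ℝ, 0 < ε → ∀ᶠ L in atTop, δ L ≤ ε := by
    intro ε hε
    obtain ⟨N, hN⟩ := Metric.tendsto_atTop.1 hδ0 ε hε
    filter_upwards [eventually_ge_atTop N] with L hLN
    have h := hN L hLN
    rw [Real.dist_eq, sub_zero] at h
    exact (le_abs_self _).trans h.le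
  -- Sseq is Cauchy
  have hcauchy : CauchySeq Sseq := by
    rw [Metric.cauchySeq_iff]
    intro ε hε
    obtain ⟨L0, hL0⟩ := eventually_atTop.1 (hδev (ε/5) (by positivity))
    refine ⟨max L0 1, fun m hm n hn => ?_⟩
    have hδm : δ m ≤ ε / 5 := hL0 m (le_trans (le_max_left _ _) hm)
    have hδn : δ n ≤ ε / 5 := hL0 n (le_trans (le_max_left _ _) hn)
    have hm1 : 1 ≤ m := le_trans (le_max_right _ _) hm
    have hn1 : 1 ≤ n := le_trans (le_max_right _ _) hn
    obtain ⟨j, hj1, hj2⟩ := ((key m hm1 (ε/5) (by positivity)).and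
      (key n hn1 (ε/5) (by positivity))).exists
    rw [dist_eq_norm]
    calc ‖Sseq m - Sseq n‖ ≤ ‖aseq j - Sseq m‖ + ‖aseq j - Sseq n‖ := by
          have hh : Sseq m - Sseq n = -(aseq j - Sseq m) + (aseq j - Sseq n) := by abel
          rw [hh]
          exact (norm_add_le _ _).trans (by rw [norm_neg])
      _ ≤ (δ m + ε/5) + (δ n + ε/5) := add_le_add hj1 hj2
      _ < ε := by linarith
  obtain ⟨Fbar, hFbar⟩ := cauchySeq_tendsto_of_complete hcauchy
  refine ⟨Fbar, ?_, hFbar⟩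
  -- aseq tends to Fbar
  rw [Metric.tendsto_atTop]
  intro ε hε
  have hevS : ∀ᶠ L in atTop, ‖Sseq L - Fbar‖ ≤ ε / 4 := by
    obtain ⟨N, hN⟩ := Metric.tendsto_atTop.1 hFbar (ε/4) (by positivity)
    filter_upwards [eventually_ge_atTop N] with L hLN
    have h := hN L hLN
    rw [dist_eq_norm] at h
    exact h.le
  obtain ⟨L, ⟨hLδ, hLF⟩, hL1⟩ :=
    (((hδev (ε/4) (by positivity)).and hevS).and (eventually_ge_atTop 1)).exists
  obtain ⟨N, hN⟩ := eventually_atTop.1 (key L hL1 (ε/4) (by positivity))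
  refine ⟨N, fun j hj => ?_⟩
  rw [dist_eq_norm]
  calc ‖aseq j - Fbar‖ ≤ ‖aseq j - Sseq L‖ + ‖Sseq L - Fbar‖ := by
        have hh : aseq j - Fbar = (aseq j - Sseq L) + (Sseq L - Fbar) := by abel
        rw [hh]; exact norm_add_le _ _
    _ ≤ (δ L + ε/4) + ε/4 := add_le_add (hN j hj) hLF
    _ < ε := by linarith
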